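/- Let d ≥ 2 be an integer and let S be a standard d-adic partition of [0,1]. If b/d^k ∈ S where b, k are nonnegative integers with b not divisible by d, then S ∩ (0,1) contains at least k elements. -/

import Mathlib

/-- `x` and `y` are consecutive elements of the finite set `P`. -/
def ConsecPair (P : Finset ℝ) (x y : ℝ) : Prop :=
  x ∈ P ∧ y ∈ P ∧ x < y ∧ ∀ z ∈ P, z ≤ x ∨ y ≤ z

/-- `[x, y]` is a standard `d`-adic interval, i.e. `x = a/d^k` and `y = (a+1)/d^k`
with `k ≥ 0` and `0 ≤ a ≤ d^k - 1`. -/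
def IsStdIntEndpoints (d : ℕ) (x y : ℝ) : Prop :=
  ∃ k a : ℕ, a + 1 ≤ d ^ k ∧ x = (a : ℝ) / (d : ℝ) ^ k ∧ y = ((a : ℝ) + 1) / (d : ℝ) ^ k

/-- `S` is a standard `d`-adic partition of `[0,1]`: a finite subset of `[0,1]`
containing `0` and `1` such that any two consecutive elements are the endpoints of a
standard `d`-adic interval. -/
def IsStdPartition (d : ℕ) (S : Finset ℝ) : Prop :=
  (0 : ℝ) ∈ S ∧ (1 : ℝ) ∈ S ∧ (∀ x ∈ S, (0:ℝ) ≤ x ∧ x ≤ 1) ∧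
  ∀ x y : ℝ, ConsecPair S x y → IsStdIntEndpoints d x y

lemma aux_div_eq (d ci cj i j : ℕ) (hd : 0 < d) (hij : i ≤ j)
    (h : ci * d ^ j = cj * d ^ i) : cj = ci * d ^ (j - i) := by
  have hpow : d ^ j = d ^ (j - i) * d ^ i := by
    rw [← pow_add]; congr 1; omega
  rw [hpow, ← Nat.mul_assoc] at h
  exact (Nat.eq_of_mul_eq_mul_right (pow_pos hd i) h).symm

lemma level_eq (d ci cj i j : ℕ) (hd : 2 ≤ d) (hi : ¬ d ∣ ci) (hj : ¬ d ∣ cj)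
    (h : (ci : ℝ) / (d : ℝ) ^ i = (cj : ℝ) / (d : ℝ) ^ j) : i = j := by
  have hd0 : 0 < d := by omega
  have hdR : (0:ℝ) < (d:ℝ) := by exact_mod_cast hd0
  have hR : (ci : ℝ) * (d : ℝ) ^ j = (cj : ℝ) * (d : ℝ) ^ i := by
    rw [div_eq_div_iff (by positivity) (by positivity)] at h
    exact h
  have hN : ci * d ^ j = cj * d ^ i := by exact_mod_cast hR
  rcases le_total i j with hij | hij
  · rcases Nat.eq_or_lt_of_le hij with h' | h'
    · exact h'
    · exfalso
      apply hj
      rw [aux_div_eq d ci cj i j hd0 hij hN]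
      exact Dvd.dvd.mul_left (dvd_pow_self d (by omega)) ci
  · rcases Nat.eq_or_lt_of_le hij with h' | h'
    · exact h'.symm
    · exfalso
      apply hi
      rw [aux_div_eq d cj ci j i hd0 hij hN.symm]
      exact Dvd.dvd.mul_left (dvd_pow_self d (by omega)) cj

/-- Key lemma: if `x ∈ S` is strictly inside a standard `d`-adic interval
`[c/d^j, (c+1)/d^j] ⊆ [0,1]`, then both endpoints of that interval belong to `S`. -/
lemma endpoint_mem (d : ℕ) (hd : 2 ≤ d) (S : Finset ℝ) (hS : IsStdPartition d S)
    (x : ℝ) (hx : x ∈ S) (j c : ℕ) (hc : c + 1 ≤ d ^ j)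
    (hLx : (c:ℝ) / (d:ℝ) ^ j < x) (hxR : x < ((c:ℝ) + 1) / (d:ℝ) ^ j) :
    (c:ℝ) / (d:ℝ) ^ j ∈ S ∧ ((c:ℝ) + 1) / (d:ℝ) ^ j ∈ S := by
  classical
  obtain ⟨h0S, h1S, hrange, hcons⟩ := hS
  have hd0 : 0 < d := by omega
  have hdR : (0:ℝ) < (d:ℝ) := by exact_mod_cast hd0
  have hpow : ∀ m : ℕ, (0:ℝ) < (d:ℝ) ^ m := fun m => by positivity
  set L : ℝ := (c:ℝ) / (d:ℝ) ^ j with hLdef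
  set R : ℝ := ((c:ℝ) + 1) / (d:ℝ) ^ j with hRdef
  have hL0 : (0:ℝ) ≤ L := by positivity
  have hR1 : R ≤ 1 := by
    rw [hRdef, div_le_one (hpow j)]
    have : ((c:ℝ) + 1) ≤ ((d ^ j : ℕ) : ℝ) := by exact_mod_cast hc
    simpa using this
  constructor
  · -- left endpoint
    have hTne : (S.filter (fun s => s ≤ L)).Nonempty :=
      ⟨0, Finset.mem_filter.mpr ⟨h0S, hL0⟩⟩
    have hUne : (S.filter (fun s => L < s)).Nonempty :=
      ⟨x, Finset.mem_filter.mpr ⟨hx, hLx⟩⟩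
    set y := (S.filter (fun s => s ≤ L)).max' hTne with hy
    set z := (S.filter (fun s => L < s)).min' hUne with hz
    have hyS : y ∈ S := (Finset.mem_filter.mp (Finset.max'_mem _ hTne)).1
    have hyL : y ≤ L := (Finset.mem_filter.mp (Finset.max'_mem _ hTne)).2
    have hzS : z ∈ S := (Finset.mem_filter.mp (Finset.min'_mem _ hUne)).1
    have hzL : L < z := (Finset.mem_filter.mp (Finset.min'_mem _ hUne)).2
    have hcp : ConsecPair S y z := by
      refine ⟨hyS, hzS, lt_of_le_of_lt hyL hzL, fun s hs => ?_⟩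
      by_cases h : s ≤ L
      · left
        have hmemT : s ∈ S.filter (fun t => t ≤ L) := Finset.mem_filter.mpr ⟨hs, h⟩
        rw [hy]
        exact Finset.le_max' _ s hmemT
      · right
        have hmemU : s ∈ S.filter (fun t => L < t) := Finset.mem_filter.mpr ⟨hs, lt_of_not_ge h⟩
        rw [hz]
        exact Finset.min'_le _ s hmemU
    obtain ⟨m, a, ham, hym, hzm⟩ := hcons y z hcp
    rcases le_or_gt j m with hjm | hmj
    · -- show y = L
      have hpowmR : (d:ℝ) ^ m = (d:ℝ) ^ (m - j) * (d:ℝ) ^ j := by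
        rw [← pow_add]; congr 1; omega
      have h1R : (a:ℝ) * (d:ℝ) ^ j ≤ (c:ℝ) * (d:ℝ) ^ m := by
        rw [hym, hLdef, div_le_div_iff₀ (hpow m) (hpow j)] at hyL
        exact hyL
      have h2R : (c:ℝ) * (d:ℝ) ^ m < ((a:ℝ) + 1) * (d:ℝ) ^ j := by
        rw [hzm, hLdef, div_lt_div_iff₀ (hpow j) (hpow m)] at hzL
        exact hzL
      have h1 : a * d ^ j ≤ c * d ^ m := by exact_mod_cast h1R
      have h2 : c * d ^ m < (a + 1) * d ^ j := by exact_mod_cast h2R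
      have hpowm : d ^ m = d ^ (m - j) * d ^ j := by rw [← pow_add]; congr 1; omega
      rw [hpowm, ← Nat.mul_assoc] at h1 h2
      have ha1 : a ≤ c * d ^ (m - j) := Nat.le_of_mul_le_mul_right h1 (pow_pos hd0 j)
      have ha2 : c * d ^ (m - j) < a + 1 := Nat.lt_of_mul_lt_mul_right h2
      have ha : a = c * d ^ (m - j) := by omega
      have hyeq : y = L := by
        rw [hym, hLdef, div_eq_div_iff (hpow m).ne' (hpow j).ne', ha, hpowmR]
        push_cast
        ring
      rw [← hyeq]; exact hyS
    · -- contradiction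
      exfalso
      have hpowjR : (d:ℝ) ^ j = (d:ℝ) ^ (j - m) * (d:ℝ) ^ m := by
        rw [← pow_add]; congr 1; omega
      have h2R : (c:ℝ) * (d:ℝ) ^ m < ((a:ℝ) + 1) * (d:ℝ) ^ j := by
        rw [hzm, hLdef, div_lt_div_iff₀ (hpow j) (hpow m)] at hzL
        exact hzL
      have h2 : c * d ^ m < (a + 1) * d ^ j := by exact_mod_cast h2R
      have hpowj : d ^ j = d ^ (j - m) * d ^ m := by rw [← pow_add]; congr 1; omega
      rw [hpowj, ← Nat.mul_assoc] at h2
      have hc2 : c < (a + 1) * d ^ (j - m) := Nat.lt_of_mul_lt_mul_right h2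
      have hc3 : c + 1 ≤ (a + 1) * d ^ (j - m) := hc2
      have hRz : R ≤ z := by
        rw [hzm, hRdef, div_le_div_iff₀ (hpow j) (hpow m)]
        have h4 : ((c:ℝ) + 1) * (d:ℝ) ^ m ≤ ((a:ℝ) + 1) * (d:ℝ) ^ (j - m) * (d:ℝ) ^ m := by
          have := (Nat.mul_le_mul_right (d ^ m) hc3)
          exact_mod_cast this
        calc ((c:ℝ) + 1) * (d:ℝ) ^ m ≤ ((a:ℝ) + 1) * (d:ℝ) ^ (j - m) * (d:ℝ) ^ m := h4
          _ = ((a:ℝ) + 1) * (d:ℝ) ^ j := by rw [hpowjR]; ring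
      rcases hcp.2.2.2 x hx with h | h
      · exact absurd (lt_of_lt_of_le hLx (le_trans h hyL)) (lt_irrefl L)
      · exact absurd (lt_of_lt_of_le hxR (le_trans hRz h)) (lt_irrefl x)
  · -- right endpoint
    have hTne : (S.filter (fun s => s < R)).Nonempty :=
      ⟨x, Finset.mem_filter.mpr ⟨hx, hxR⟩⟩
    have hUne : (S.filter (fun s => R ≤ s)).Nonempty :=
      ⟨1, Finset.mem_filter.mpr ⟨h1S, hR1⟩⟩
    set y := (S.filter (fun s => s < R)).max' hTne with hy
    set z := (S.filter (fun s => R ≤ s)).min' hUne with hz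
    have hyS : y ∈ S := (Finset.mem_filter.mp (Finset.max'_mem _ hTne)).1
    have hyR : y < R := (Finset.mem_filter.mp (Finset.max'_mem _ hTne)).2
    have hzS : z ∈ S := (Finset.mem_filter.mp (Finset.min'_mem _ hUne)).1
    have hzR : R ≤ z := (Finset.mem_filter.mp (Finset.min'_mem _ hUne)).2
    have hcp : ConsecPair S y z := by
      refine ⟨hyS, hzS, lt_of_lt_of_le hyR hzR, fun s hs => ?_⟩
      by_cases h : s < R
      · left
        have hmemT : s ∈ S.filter (fun t => t < R) := Finset.mem_filter.mpr ⟨hs, h⟩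
        rw [hy]
        exact Finset.le_max' _ s hmemT
      · right
        have hmemU : s ∈ S.filter (fun t => R ≤ t) := Finset.mem_filter.mpr ⟨hs, le_of_not_gt h⟩
        rw [hz]
        exact Finset.min'_le _ s hmemU
    obtain ⟨m, a, ham, hym, hzm⟩ := hcons y z hcp
    rcases le_or_gt j m with hjm | hmj
    · -- show z = R
      have hpowmR : (d:ℝ) ^ m = (d:ℝ) ^ (m - j) * (d:ℝ) ^ j := by
        rw [← pow_add]; congr 1; omega
      have h1R : (a:ℝ) * (d:ℝ) ^ j < ((c:ℝ) + 1) * (d:ℝ) ^ m := by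
        rw [hym, hRdef, div_lt_div_iff₀ (hpow m) (hpow j)] at hyR
        exact hyR
      have h2R : ((c:ℝ) + 1) * (d:ℝ) ^ m ≤ ((a:ℝ) + 1) * (d:ℝ) ^ j := by
        rw [hzm, hRdef, div_le_div_iff₀ (hpow j) (hpow m)] at hzR
        exact hzR
      have h1 : a * d ^ j < (c + 1) * d ^ m := by exact_mod_cast h1R
      have h2 : (c + 1) * d ^ m ≤ (a + 1) * d ^ j := by exact_mod_cast h2R
      have hpowm : d ^ m = d ^ (m - j) * d ^ j := by rw [← pow_add]; congr 1; omega
      rw [hpowm, ← Nat.mul_assoc] at h1 h2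
      have ha1 : a < (c + 1) * d ^ (m - j) := Nat.lt_of_mul_lt_mul_right h1
      have ha2 : (c + 1) * d ^ (m - j) ≤ a + 1 :=
        Nat.le_of_mul_le_mul_right h2 (pow_pos hd0 j)
      have ha : a + 1 = (c + 1) * d ^ (m - j) := by omega
      have hzeq : z = R := by
        rw [hzm, hRdef, div_eq_div_iff (hpow m).ne' (hpow j).ne']
        have haR : ((a:ℝ) + 1) = ((c:ℝ) + 1) * (d:ℝ) ^ (m - j) := by exact_mod_cast ha
        rw [haR, hpowmR]
        ring
      rw [← hzeq]; exact hzS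
    · -- contradiction
      exfalso
      have hpowjR : (d:ℝ) ^ j = (d:ℝ) ^ (j - m) * (d:ℝ) ^ m := by
        rw [← pow_add]; congr 1; omega
      have h1R : (a:ℝ) * (d:ℝ) ^ j < ((c:ℝ) + 1) * (d:ℝ) ^ m := by
        rw [hym, hRdef, div_lt_div_iff₀ (hpow m) (hpow j)] at hyR
        exact hyR
      have h1 : a * d ^ j < (c + 1) * d ^ m := by exact_mod_cast h1R
      have hpowj : d ^ j = d ^ (j - m) * d ^ m := by rw [← pow_add]; congr 1; omega
      rw [hpowj, ← Nat.mul_assoc] at h1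
      have hc2 : a * d ^ (j - m) < c + 1 := Nat.lt_of_mul_lt_mul_right h1
      have hc3 : a * d ^ (j - m) ≤ c := by omega
      have hyL : y ≤ L := by
        rw [hym, hLdef, div_le_div_iff₀ (hpow m) (hpow j)]
        have h4 : (a:ℝ) * (d:ℝ) ^ (j - m) * (d:ℝ) ^ m ≤ (c:ℝ) * (d:ℝ) ^ m := by
          have := (Nat.mul_le_mul_right (d ^ m) hc3)
          exact_mod_cast this
        calc (a:ℝ) * (d:ℝ) ^ j = (a:ℝ) * (d:ℝ) ^ (j - m) * (d:ℝ) ^ m := by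
              rw [hpowjR]; ring
          _ ≤ (c:ℝ) * (d:ℝ) ^ m := h4
      rcases hcp.2.2.2 x hx with h | h
      · exact absurd (lt_of_lt_of_le hLx (le_trans h hyL)) (lt_irrefl L)
      · exact absurd (lt_of_lt_of_le hxR (le_trans hzR h)) (lt_irrefl x)

/-- If `b/d^k ∈ S` for a standard `d`-adic partition `S`, with `b` not divisible by
`d`, then `S ∩ (0,1)` contains at least `k` elements. -/
theorem stmt1 (d : ℕ) (hd : 2 ≤ d) (S : Finset ℝ) (hS : IsStdPartition d S)
    (b k : ℕ) (hb : ¬ d ∣ b) (hmem : (b : ℝ) / (d : ℝ) ^ k ∈ S) :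
    k ≤ ((S : Set ℝ) ∩ Set.Ioo (0:ℝ) 1).ncard := by
  classical
  rcases Nat.eq_zero_or_pos k with hk0 | hk
  · simp [hk0]
  have hd0 : 0 < d := by omega
  have hdR : (0:ℝ) < (d:ℝ) := by exact_mod_cast hd0
  have hpow : ∀ m : ℕ, (0:ℝ) < (d:ℝ) ^ m := fun m => by positivity
  have hb0 : 0 < b := Nat.pos_of_ne_zero (fun h => hb (h ▸ dvd_zero d))
  have hxle : (b:ℝ) / (d:ℝ) ^ k ≤ 1 := (hS.2.2.1 _ hmem).2
  have hbd : b ≤ d ^ k := by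
    rw [div_le_one (hpow k)] at hxle
    exact_mod_cast hxle
  have hblt : b < d ^ k := by
    rcases Nat.eq_or_lt_of_le hbd with h | h
    · exact absurd (h ▸ dvd_pow_self d (Nat.pos_iff_ne_zero.mp hk)) hb
    · exact h
  -- for each level 1 ≤ j ≤ k there is an element of S ∩ (0,1) of exact level j
  have key : ∀ j : ℕ, ∃ c : ℕ, (1 ≤ j ∧ j ≤ k) →
      (¬ d ∣ c ∧ (c:ℝ) / (d:ℝ) ^ j ∈ S ∧ 0 < (c:ℝ) / (d:ℝ) ^ j ∧ (c:ℝ) / (d:ℝ) ^ j < 1) := by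
    intro j
    by_cases hj : 1 ≤ j ∧ j ≤ k
    · obtain ⟨hj1, hjk⟩ := hj
      rcases Nat.eq_or_lt_of_le hjk with hjeq | hjlt
      · refine ⟨b, fun _ => ⟨hb, ?_, ?_, ?_⟩⟩
        · rw [hjeq]; exact hmem
        · have : (0:ℝ) < (b:ℝ) := by exact_mod_cast hb0
          positivity
        · rw [div_lt_one (hpow j), hjeq]
          exact_mod_cast hblt
      · -- j < k
        set c0 := b / d ^ (k - j) with hc0
        have hkj : 0 < k - j := by omega
        have hpkj : 0 < d ^ (k - j) := pow_pos hd0 _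
        have hlow : c0 * d ^ (k - j) ≤ b := Nat.div_mul_le_self b _
        have hlow' : c0 * d ^ (k - j) < b := by
          rcases Nat.eq_or_lt_of_le hlow with h | h
          · exfalso
            apply hb
            have hdd : d ∣ c0 * d ^ (k - j) :=
              Dvd.dvd.mul_left (dvd_pow_self d (by omega)) c0
            exact h ▸ hdd
          · exact h
        have hhigh : b < (c0 + 1) * d ^ (k - j) := by
          rw [Nat.add_mul, one_mul, hc0]
          exact Nat.lt_div_mul_add hpkj
        have hc1 : c0 + 1 ≤ d ^ j := by
          have hlt : c0 < d ^ j := by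
            rw [hc0, Nat.div_lt_iff_lt_mul hpkj,
              show d ^ j * d ^ (k - j) = d ^ k from by rw [← pow_add]; congr 1; omega]
            exact hblt
          omega
        have hpowk : d ^ k = d ^ (k - j) * d ^ j := by rw [← pow_add]; congr 1; omega
        have hLx : (c0:ℝ) / (d:ℝ) ^ j < (b:ℝ) / (d:ℝ) ^ k := by
          rw [div_lt_div_iff₀ (hpow j) (hpow k)]
          have h' : c0 * d ^ k < b * d ^ j := by
            rw [hpowk, ← Nat.mul_assoc]
            exact (Nat.mul_lt_mul_right (pow_pos hd0 _)).mpr hlow'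
          exact_mod_cast h'
        have hxR : (b:ℝ) / (d:ℝ) ^ k < ((c0:ℝ) + 1) / (d:ℝ) ^ j := by
          rw [div_lt_div_iff₀ (hpow k) (hpow j)]
          have h' : b * d ^ j < (c0 + 1) * d ^ k := by
            rw [hpowk, ← Nat.mul_assoc]
            exact (Nat.mul_lt_mul_right (pow_pos hd0 _)).mpr hhigh
          exact_mod_cast h'
        obtain ⟨hLmem, hRmem⟩ := endpoint_mem d hd S hS _ hmem j c0 hc1 hLx hxR
        by_cases hdc : d ∣ c0
        · -- use right endpoint c0 + 1
          have hnd : ¬ d ∣ (c0 + 1) := by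
            intro h
            have h1 : d ∣ (c0 + 1) - c0 := Nat.dvd_sub h hdc
            simp only [Nat.add_sub_cancel_left] at h1
            have := Nat.le_of_dvd one_pos h1
            omega
          refine ⟨c0 + 1, fun _ => ⟨hnd, ?_, ?_, ?_⟩⟩
          · exact_mod_cast hRmem
          · positivity
          · rw [div_lt_one (hpow j)]
            have hne : c0 + 1 ≠ d ^ j := by
              intro h
              exact hnd (h ▸ dvd_pow_self d (by omega))
            have hlt : c0 + 1 < d ^ j := by omega
            exact_mod_cast hlt
        · -- use left endpoint c0
          have hc0pos : 0 < c0 := Nat.pos_of_ne_zero (fun h => hdc (h ▸ dvd_zero d))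
          refine ⟨c0, fun _ => ⟨hdc, hLmem, ?_, ?_⟩⟩
          · have : (0:ℝ) < (c0:ℝ) := by exact_mod_cast hc0pos
            positivity
          · rw [div_lt_one (hpow j)]
            have hlt : c0 < d ^ j := by omega
            exact_mod_cast hlt
    · exact ⟨0, fun h => absurd h hj⟩
  choose c hc using key
  set T : Finset ℝ := S.filter (fun y => 0 < y ∧ y < 1) with hT
  have hset : ((S : Set ℝ) ∩ Set.Ioo (0:ℝ) 1) = ↑T := by
    ext t
    constructor
    · rintro ⟨ht, h0, h1⟩
      exact Finset.mem_coe.mpr (Finset.mem_filter.mpr ⟨ht, h0, h1⟩)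
    · intro ht
      obtain ⟨ht', h0, h1⟩ := Finset.mem_filter.mp (Finset.mem_coe.mp ht)
      exact ⟨ht', h0, h1⟩
  rw [hset, Set.ncard_coe_finset]
  have hcard : (Finset.range k).card ≤ T.card := by
    apply Finset.card_le_card_of_injOn (fun j => ((c (j + 1) : ℝ) / (d:ℝ) ^ (j + 1)))
    · intro i hi
      have hik : i < k := Finset.mem_range.mp hi
      obtain ⟨hdvd, hmem', hpos, hlt⟩ := hc (i + 1) ⟨by omega, by omega⟩
      exact Finset.mem_filter.mpr ⟨hmem', hpos, hlt⟩
    · intro i hi i' hi' heq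
      have hik : i < k := Finset.mem_range.mp hi
      have hik' : i' < k := Finset.mem_range.mp hi'
      obtain ⟨hdvd, -, -, -⟩ := hc (i + 1) ⟨by omega, by omega⟩
      obtain ⟨hdvd', -, -, -⟩ := hc (i' + 1) ⟨by omega, by omega⟩
      have := level_eq d (c (i + 1)) (c (i' + 1)) (i + 1) (i' + 1) hd hdvd hdvd' heq
      omega
  simpa using hcard
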